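/- For μ a Borel measure on a metric space X, x ≠ y points with y ∈ supp(μ), and f_δ = χ_{U(x,δ)\U(y,d(x,y))}/μ(U(x,δ)\U(y,d(x,y))) (assumed well-defined for small δ > 0), the centered maximal function satisfies M^c_μ f_δ(y) ≤ 1/μ(B(y,d(x,y))), and hence limsup_{δ→0} M^c_μ f_δ(y) ≤ 1/μ(B(y,d(x,y))). -/

import Mathlib

open MeasureTheory Metric ENNReal Filter

/-- A set is a (nondegenerate) closed ball. -/
def IsClosedBall {X : Type*} [MetricSpace X] (B : Set X) : Prop :=
  ∃ (c : X) (r : ℝ), 0 < r ∧ B = Metric.closedBall c r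

/-- The support of a measure: points all of whose neighborhoods have positive measure. -/
def suppM {X : Type*} [MetricSpace X] [MeasurableSpace X] (μ : Measure X) : Set X :=
  {x | ∀ r > (0 : ℝ), 0 < μ (Metric.ball x r)}

/-- Average of `f` over a set, declared `0` when the set is `μ`-null. -/
noncomputable def avg {X : Type*} [MetricSpace X] [MeasurableSpace X]
    (μ : Measure X) (f : X → ℝ≥0∞) (B : Set X) : ℝ≥0∞ :=
  if μ B = 0 then 0 else (∫⁻ y in B, f y ∂μ) / μ B

/-- Centered Hardy–Littlewood maximal function. -/
noncomputable def Mc {X : Type*} [MetricSpace X] [MeasurableSpace X]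
    (μ : Measure X) (f : X → ℝ≥0∞) (x : X) : ℝ≥0∞ :=
  ⨆ r > (0 : ℝ), avg μ f (Metric.closedBall x r)

/-- Non-centered Hardy–Littlewood maximal function. -/
noncomputable def Munc {X : Type*} [MetricSpace X] [MeasurableSpace X]
    (μ : Measure X) (f : X → ℝ≥0∞) (x : X) : ℝ≥0∞ :=
  ⨆ B ∈ {B : Set X | IsClosedBall B ∧ x ∈ B}, avg μ f B

/-- Ratio of measures with the convention `0` when the denominator vanishes. -/
noncomputable def ratio0 {X : Type*} [MeasurableSpace X] (μ ν : MeasureTheory.Measure X) (B : Set X) : ℝ≥0∞ :=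
  if μ B = 0 then 0 else ν B / μ B

/-- Centered maximal function of a measure `ν` with respect to `μ`. -/
noncomputable def McMeas {X : Type*} [MetricSpace X] [MeasurableSpace X]
    (μ ν : Measure X) (x : X) : ℝ≥0∞ :=
  ⨆ r > (0 : ℝ), ratio0 μ ν (Metric.closedBall x r)

/-- Non-centered maximal function of a measure `ν` with respect to `μ`. -/
noncomputable def MuncMeas {X : Type*} [MetricSpace X] [MeasurableSpace X]
    (μ ν : Measure X) (x : X) : ℝ≥0∞ :=
  ⨆ B ∈ {B : Set X | IsClosedBall B ∧ x ∈ B}, ratio0 μ ν B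
/-- The centered maximal function of the normalized indicator
`f_δ = χ_{U(x,δ) \ U(y,d(x,y))} / μ(U(x,δ) \ U(y,d(x,y)))` at `y` is bounded by
`1 / μ(B(y, d(x,y)))`, and hence so is its limsup as `δ → 0⁺`. -/
theorem centered_maximal_indicator_bound {X : Type*} [MetricSpace X] [MeasurableSpace X]
    [BorelSpace X]
    (μ : Measure X) (hfin : ∀ (c : X) (r : ℝ), μ (closedBall c r) ≠ ∞)
    (x y : X) (hxy : x ≠ y) (hy : y ∈ suppM μ)
    (hpos : ∀ᶠ δ in nhdsWithin (0 : ℝ) (Set.Ioi 0),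
      μ (ball x δ \ ball y (dist x y)) ≠ 0) :
    (∀ δ : ℝ, 0 < δ → μ (ball x δ \ ball y (dist x y)) ≠ 0 →
      Mc μ ((ball x δ \ ball y (dist x y)).indicator
        (fun _ => (μ (ball x δ \ ball y (dist x y)))⁻¹)) y ≤
        (μ (closedBall y (dist x y)))⁻¹) ∧
    limsup (fun δ : ℝ =>
        Mc μ ((ball x δ \ ball y (dist x y)).indicator
          (fun _ => (μ (ball x δ \ ball y (dist x y)))⁻¹)) y)
      (nhdsWithin (0 : ℝ) (Set.Ioi 0)) ≤ (μ (closedBall y (dist x y)))⁻¹ := by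

  have hd0 : 0 < dist x y := dist_pos.mpr hxy
  have hyb : 0 < μ (closedBall y (dist x y)) :=
    lt_of_lt_of_le (hy (dist x y) hd0) (measure_mono ball_subset_closedBall)
  have main : ∀ δ : ℝ, 0 < δ → μ (ball x δ \ ball y (dist x y)) ≠ 0 →
      Mc μ ((ball x δ \ ball y (dist x y)).indicator
        (fun _ => (μ (ball x δ \ ball y (dist x y)))⁻¹)) y ≤
        (μ (closedBall y (dist x y)))⁻¹ := by
    intro δ hδ hS0
    set S := ball x δ \ ball y (dist x y) with hSdef
    have hSmeas : MeasurableSet S := measurableSet_ball.diff measurableSet_ball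
    have hSfin : μ S ≠ ∞ := by
      refine ne_top_of_le_ne_top (hfin x δ) (measure_mono ?_)
      exact Set.diff_subset.trans ball_subset_closedBall
    rw [Mc]
    refine iSup₂_le fun r hr => ?_
    rw [avg]
    split_ifs with h
    · exact zero_le
    have hint : (∫⁻ z in closedBall y r, S.indicator (fun _ => (μ S)⁻¹) z ∂μ)
        = (μ S)⁻¹ * μ (S ∩ closedBall y r) := by
      rw [lintegral_indicator hSmeas, setLIntegral_const, Measure.restrict_apply hSmeas]
    rw [hint]
    rcases lt_or_ge r (dist x y) with hrd | hrd
    · have : S ∩ closedBall y r = ∅ := by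
        ext z
        simp only [Set.mem_inter_iff, Set.mem_empty_iff_false, iff_false, not_and,
          hSdef, Set.mem_diff, mem_ball, mem_closedBall]
        rintro ⟨_, hz2⟩ hz3
        exact hz2 (lt_of_le_of_lt hz3 hrd)
      rw [this, measure_empty, mul_zero, ENNReal.zero_div]
      exact zero_le
    · have h1 : (μ S)⁻¹ * μ (S ∩ closedBall y r) ≤ 1 := by
        calc (μ S)⁻¹ * μ (S ∩ closedBall y r) ≤ (μ S)⁻¹ * μ S :=
              mul_le_mul_right (measure_mono Set.inter_subset_left) _
          _ = 1 := ENNReal.inv_mul_cancel hS0 hSfin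
      calc (μ S)⁻¹ * μ (S ∩ closedBall y r) / μ (closedBall y r)
          ≤ 1 / μ (closedBall y r) := ENNReal.div_le_div_right h1 _
        _ = (μ (closedBall y r))⁻¹ := one_div _
        _ ≤ (μ (closedBall y (dist x y)))⁻¹ :=
            ENNReal.inv_le_inv' (measure_mono (closedBall_subset_closedBall hrd))
  refine ⟨main, ?_⟩
  refine limsup_le_of_le (by isBoundedDefault) ?_
  filter_upwards [hpos, self_mem_nhdsWithin] with δ h1 h2
  exact main δ h2 h1
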